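/- Let A be a monotone operator on a real Hilbert space H and let u₁, u₂ : [0, T] → H be locally Lipschitz functions such that for almost every t ∈ (0, T), both uᵢ are differentiable at t and −uᵢ′(t) ∈ A(uᵢ(t)) for i = 1, 2. Then the function t ↦ ‖u₁(t) − u₂(t)‖ is nonincreasing on [0, T]. -/

import Mathlib

open RealInnerProductSpace MeasureTheory Set

/-- An operator (identified with its graph) is monotone. -/
def MonotoneOp {H : Type*} [NormedAddCommGroup H] [InnerProductSpace ℝ H]
    (A : Set (H × H)) : Prop :=
  ∀ p ∈ A, ∀ q ∈ A, (0:ℝ) ≤ ⟪p.2 - q.2, p.1 - q.1⟫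

/-- A locally Lipschitz function on a compact interval admits a global Lipschitz-type bound. -/
lemma locallyLipschitzOn_Icc_exists_bound {E : Type*} [PseudoMetricSpace E] {a b : ℝ}
    {f : ℝ → E} (hf : LocallyLipschitzOn (Icc a b) f) :
    ∃ C : ℝ, 0 ≤ C ∧ ∀ x ∈ Icc a b, ∀ y ∈ Icc a b, dist (f x) (f y) ≤ C * |y - x| := by
  have key : ∀ x ∈ Icc a b, ∃ (K : NNReal) (V : Set ℝ),
      IsOpen V ∧ x ∈ V ∧ LipschitzOnWith K f (Icc a b ∩ V) := by
    intro x hx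
    obtain ⟨K, t, ht, hK⟩ := hf hx
    obtain ⟨V, hVo, hxV, hVsub⟩ := mem_nhdsWithin.mp ht
    refine ⟨K, V, hVo, hxV, hK.mono ?_⟩
    intro z hz
    exact hVsub ⟨hz.2, hz.1⟩
  choose! K V hVo hxV hlip using key
  have hcov : Icc a b ⊆ ⋃ x ∈ Icc a b, V x := fun x hx => mem_biUnion hx (hxV x hx)
  obtain ⟨F, hFsub, hFfin, hFcov⟩ :=
    isCompact_Icc.elim_finite_subcover_image (fun x hx => hVo x hx) hcov
  have hFcov' : Icc a b ⊆ ⋃ i : F, V i := by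
    intro x hx
    obtain ⟨i, hiF, hxi⟩ := mem_iUnion₂.mp (hFcov hx)
    exact mem_iUnion.mpr ⟨⟨i, hiF⟩, hxi⟩
  obtain ⟨δ, hδ, hball⟩ := lebesgue_number_lemma_of_metric isCompact_Icc
    (fun i : F => hVo i (hFsub i.2)) hFcov'
  obtain ⟨C₀, hC₀⟩ := (hFfin.image (fun x => (K x : ℝ))).bddAbove
  set C := max C₀ 0 with hC_def
  have hCnn : 0 ≤ C := le_max_right _ _
  have hKC : ∀ i : F, (K i : ℝ) ≤ C :=
    fun i => le_trans (hC₀ (mem_image_of_mem _ i.2)) (le_max_left _ _)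
  refine ⟨C, hCnn, ?_⟩
  have main : ∀ x ∈ Icc a b, ∀ y ∈ Icc a b, x ≤ y → dist (f x) (f y) ≤ C * (y - x) := by
    intro x hx y hy hxy
    obtain ⟨n, hn⟩ := exists_nat_gt ((y - x) / δ)
    have hyx : 0 ≤ y - x := sub_nonneg.2 hxy
    have hn0 : 0 < (n : ℝ) := lt_of_le_of_lt (div_nonneg hyx hδ.le) hn
    have hstep : (y - x) / n < δ := by
      rw [div_lt_iff₀ hn0]
      rw [div_lt_iff₀ hδ] at hn
      linarith [hn]
    have hstep0 : 0 ≤ (y - x) / n := div_nonneg hyx hn0.le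
    set p : ℕ → ℝ := fun i => x + i * ((y - x) / n) with hp_def
    have hple : ∀ i : ℕ, i ≤ n → (i : ℝ) * ((y - x) / n) ≤ y - x := by
      intro i hi
      have h1 : (i : ℝ) ≤ n := Nat.cast_le.2 hi
      calc (i : ℝ) * ((y - x) / n) ≤ n * ((y - x) / n) :=
            mul_le_mul_of_nonneg_right h1 hstep0
        _ = y - x := by field_simp
    have hmem : ∀ i : ℕ, i ≤ n → p i ∈ Icc a b := by
      intro i hi
      have h1 : 0 ≤ (i : ℝ) * ((y - x) / n) := mul_nonneg i.cast_nonneg hstep0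
      have h2 := hple i hi
      exact ⟨le_trans hx.1 (by simp only [hp_def]; linarith),
        le_trans (by simp only [hp_def]; linarith) hy.2⟩
    have hp0 : p 0 = x := by simp [hp_def]
    have hpn : p n = y := by
      simp only [hp_def]
      field_simp
      ring
    have hsucc : ∀ i : ℕ, p (i + 1) - p i = (y - x) / n := by
      intro i
      simp only [hp_def, Nat.cast_add, Nat.cast_one]
      ring
    calc dist (f x) (f y) = dist (f (p 0)) (f (p n)) := by rw [hp0, hpn]
      _ ≤ ∑ i ∈ Finset.range n, dist (f (p i)) (f (p (i + 1))) := dist_le_range_sum_dist (fun i => f (p i)) n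
      _ ≤ ∑ i ∈ Finset.range n, C * ((y - x) / n) := by
          apply Finset.sum_le_sum
          intro i hi
          have hi' : i < n := Finset.mem_range.mp hi
          obtain ⟨j, hj⟩ := hball (p i) (hmem i hi'.le)
          have h1 : p i ∈ Metric.ball (p i) δ := Metric.mem_ball_self hδ
          have h2 : p (i + 1) ∈ Metric.ball (p i) δ := by
            rw [Metric.mem_ball, Real.dist_eq, hsucc i, abs_of_nonneg hstep0]
            exact hstep
          have hdist : dist (p i) (p (i + 1)) = (y - x) / n := by
            rw [Real.dist_eq, abs_sub_comm, hsucc i, abs_of_nonneg hstep0]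
          calc dist (f (p i)) (f (p (i + 1)))
              ≤ (K j : ℝ) * dist (p i) (p (i + 1)) :=
                (hlip j (hFsub j.2)).dist_le_mul _ ⟨hmem i hi'.le, hj h1⟩
                  _ ⟨hmem (i + 1) hi', hj h2⟩
            _ ≤ C * ((y - x) / n) := by
                rw [hdist]
                exact mul_le_mul_of_nonneg_right (hKC j) hstep0
      _ = C * (y - x) := by
          rw [Finset.sum_const, Finset.card_range, nsmul_eq_mul]
          field_simp
  intro x hx y hy
  rcases le_total x y with h | h
  · rw [abs_of_nonneg (sub_nonneg.2 h)]
    exact main x hx y hy h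
  · rw [abs_of_nonpos (sub_nonpos.2 h), dist_comm]
    have := main y hy x hx h
    linarith [this]

/-- for two locally Lipschitz solutions of `u̇ ∈ −Au` on `[0, T]` with `A`
monotone, the distance `t ↦ ‖u₁(t) − u₂(t)‖` is nonincreasing on `[0, T]`. -/
theorem stmt4 {H : Type*} [NormedAddCommGroup H] [InnerProductSpace ℝ H] [CompleteSpace H]
    (A : Set (H × H)) (hA : A.Nonempty) (hmono : MonotoneOp A)
    (T : ℝ) (hT : 0 < T) (u₁ u₂ : ℝ → H)
    (h₁lip : LocallyLipschitzOn (Icc 0 T) u₁)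
    (h₂lip : LocallyLipschitzOn (Icc 0 T) u₂)
    (hae : ∀ᵐ t ∂(volume.restrict (Ioo 0 T)),
      ∃ d₁ d₂ : H, HasDerivAt u₁ d₁ t ∧ HasDerivAt u₂ d₂ t ∧
        (u₁ t, -d₁) ∈ A ∧ (u₂ t, -d₂) ∈ A) :
    AntitoneOn (fun t => ‖u₁ t - u₂ t‖) (Icc 0 T) := by
  obtain ⟨C₁, hC₁0, hC₁⟩ := locallyLipschitzOn_Icc_exists_bound h₁lip
  obtain ⟨C₂, hC₂0, hC₂⟩ := locallyLipschitzOn_Icc_exists_bound h₂lip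
  set w : ℝ → H := fun τ => u₁ τ - u₂ τ with hw_def
  have hwcont : ContinuousOn w (Icc 0 T) := h₁lip.continuousOn.sub h₂lip.continuousOn
  obtain ⟨M₀, hM₀⟩ := isCompact_Icc.exists_bound_of_continuousOn hwcont
  set M := max M₀ 0 with hM_def
  have hM0 : 0 ≤ M := le_max_right _ _
  have hM : ∀ τ ∈ Icc 0 T, ‖w τ‖ ≤ M := fun τ hτ => le_trans (hM₀ τ hτ) (le_max_left _ _)
  set C : ℝ := 2 * M * (C₁ + C₂) with hC_def
  have hC0 : 0 ≤ C := by
    apply mul_nonneg (by linarith) (by linarith)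
  set g : ℝ → ℝ := fun τ => ‖w τ‖ ^ 2 with hg_def
  have hg_lip : ∀ x ∈ Icc 0 T, ∀ y ∈ Icc 0 T, |g y - g x| ≤ C * |y - x| := by
    intro x hx y hy
    have h2 : |‖w y‖ - ‖w x‖| ≤ ‖w y - w x‖ := abs_norm_sub_norm_le _ _
    have h3 : ‖w y - w x‖ ≤ (C₁ + C₂) * |y - x| := by
      have heq : w y - w x = (u₁ y - u₁ x) - (u₂ y - u₂ x) := by
        simp only [hw_def]; abel
      calc ‖w y - w x‖ ≤ ‖u₁ y - u₁ x‖ + ‖u₂ y - u₂ x‖ := by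
            rw [heq]; exact norm_sub_le _ _
        _ ≤ C₁ * |x - y| + C₂ * |x - y| := by
            have e1 := hC₁ y hy x hx
            have e2 := hC₂ y hy x hx
            rw [dist_eq_norm] at e1 e2
            exact add_le_add e1 e2
        _ = (C₁ + C₂) * |y - x| := by rw [abs_sub_comm]; ring
    have h4 : ‖w y‖ + ‖w x‖ ≤ 2 * M := by
      have := hM y hy; have := hM x hx; linarith
    have h5 : |g y - g x| = |‖w y‖ - ‖w x‖| * (‖w y‖ + ‖w x‖) := by
      have : g y - g x = (‖w y‖ - ‖w x‖) * (‖w y‖ + ‖w x‖) := by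
        simp only [hg_def]; ring
      rw [this, abs_mul, abs_of_nonneg (by positivity : (0:ℝ) ≤ ‖w y‖ + ‖w x‖)]
    rw [h5, hC_def]
    calc |‖w y‖ - ‖w x‖| * (‖w y‖ + ‖w x‖) ≤ ((C₁ + C₂) * |y - x|) * (2 * M) := by
          apply mul_le_mul (le_trans h2 h3) h4 (by positivity) (by positivity)
      _ = 2 * M * (C₁ + C₂) * |y - x| := by ring
  have hg_cont : ContinuousOn g (Icc 0 T) := (hwcont.norm).pow 2
  intro s hs t ht hst
  simp only
  have key : g t ≤ g s := by
    rcases eq_or_lt_of_le hst with rfl | hlt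
    · exact le_rfl
    have hIccsub : Icc s t ⊆ Icc 0 T := Icc_subset_Icc hs.1 ht.2
    have hεbound : ∀ ε : ℝ, 0 < ε → g t ≤ g s + 2 * C * ε := by
      intro ε hε
      set P : ℝ → Prop := fun τ => ∃ d₁ d₂ : H, HasDerivAt u₁ d₁ τ ∧ HasDerivAt u₂ d₂ τ ∧
        (u₁ τ, -d₁) ∈ A ∧ (u₂ τ, -d₂) ∈ A with hP_def
      have hN : volume ({τ | ¬ P τ} ∩ Ioo 0 T) = 0 := by
        have h := hae
        rw [ae_iff] at h
        rwa [Measure.restrict_apply' measurableSet_Ioo] at h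
      have hN' : volume (insert 0 ({τ | ¬ P τ} ∩ Ioo 0 T)) = 0 := by
        rw [Set.insert_eq]
        exact measure_union_null Real.volume_singleton hN
      obtain ⟨U, hUsup, hUopen, hUvol⟩ := Set.exists_isOpen_lt_of_lt _ (ENNReal.ofReal ε)
        (by rw [hN']; exact ENNReal.ofReal_pos.mpr hε)
      have hUfin : ∀ s' : Set ℝ, s' ⊆ U → volume s' ≠ ⊤ :=
        fun s' h => ((measure_mono h).trans_lt (hUvol.trans_le le_top)).ne
      set m : ℝ → ℝ := fun x => (volume (U ∩ Ioc s x)).toReal with hm_def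
      have hm_mono : Monotone m := by
        intro x y hxy
        exact ENNReal.toReal_mono (hUfin _ inter_subset_left)
          (measure_mono (inter_subset_inter_right _ (Ioc_subset_Ioc_right hxy)))
      have hm_add : ∀ x z, s ≤ x → x ≤ z → m z - m x = (volume (U ∩ Ioc x z)).toReal := by
        intro x z hsx hxz
        have hsplit : U ∩ Ioc s z = (U ∩ Ioc s x) ∪ (U ∩ Ioc x z) := by
          rw [← inter_union_distrib_left, Ioc_union_Ioc_eq_Ioc hsx hxz]
        have hdisj : Disjoint (U ∩ Ioc s x) (U ∩ Ioc x z) :=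
          (Ioc_disjoint_Ioc_of_le le_rfl).mono inter_subset_right inter_subset_right
        have hmeas : MeasurableSet (U ∩ Ioc x z) :=
          hUopen.measurableSet.inter measurableSet_Ioc
        simp only [hm_def]
        rw [hsplit, measure_union hdisj hmeas,
          ENNReal.toReal_add (hUfin _ inter_subset_left) (hUfin _ inter_subset_left)]
        ring
      have hm_lip : ∀ x z, s ≤ x → x ≤ z → m z - m x ≤ z - x := by
        intro x z hsx hxz
        rw [hm_add x z hsx hxz]
        have h1 : volume (U ∩ Ioc x z) ≤ ENNReal.ofReal (z - x) := by
          calc volume (U ∩ Ioc x z) ≤ volume (Ioc x z) := measure_mono inter_subset_right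
            _ = ENNReal.ofReal (z - x) := Real.volume_Ioc
        exact ENNReal.toReal_le_of_le_ofReal (by linarith) h1
      have hm_cont : ContinuousOn m (Icc s t) := by
        apply LipschitzOnWith.continuousOn (K := 1)
        apply LipschitzOnWith.of_dist_le_mul
        intro x hx y hy
        rw [Real.dist_eq, Real.dist_eq, NNReal.coe_one, one_mul]
        rcases le_total x y with h | h
        · rw [abs_of_nonpos (by linarith [hm_mono h] : m x - m y ≤ 0),
            abs_of_nonpos (by linarith : x - y ≤ 0)]
          linarith [hm_lip x y hx.1 h]
        · rw [abs_of_nonneg (by linarith [hm_mono h] : 0 ≤ m x - m y),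
            abs_of_nonneg (by linarith : 0 ≤ x - y)]
          linarith [hm_lip y x hy.1 h]
      set fF : ℝ → ℝ := fun x => g x - 2 * C * m x with hfF_def
      have hf_cont : ContinuousOn fF (Icc s t) :=
        (hg_cont.mono hIccsub).sub (continuousOn_const.mul hm_cont)
      have bound : ∀ x ∈ Ico s t, ∀ r : ℝ, (0:ℝ) < r → ∃ᶠ z in nhdsWithin x (Ioi x),
          slope fF x z < r := by
        intro x hx r hr
        have hxIcc : x ∈ Icc 0 T := ⟨le_trans hs.1 hx.1, le_trans hx.2.le ht.2⟩
        by_cases hxU : x ∈ U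
        · obtain ⟨δ', hδ', hballU⟩ := Metric.isOpen_iff.mp hUopen x hxU
          have hmin : x < min (x + δ') t := lt_min (by linarith) hx.2
          have hev : ∀ᶠ z in nhdsWithin x (Ioi x), z ∈ Ioo x (min (x + δ') t) := by
            filter_upwards [Ioo_mem_nhdsGT hmin] with z hz using hz
          refine (hev.mono ?_).frequently
          intro z hz
          have hxz : x < z := hz.1
          have hzt : z < t := lt_of_lt_of_le hz.2 (min_le_right _ _)
          have hzδ : z < x + δ' := lt_of_lt_of_le hz.2 (min_le_left _ _)
          have hIocU : Ioc x z ⊆ U := by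
            intro y hy
            apply hballU
            rw [Metric.mem_ball, Real.dist_eq, abs_of_pos (by linarith [hy.1] : (0:ℝ) < y - x)]
            linarith [hy.2]
          have hmz : m z - m x = z - x := by
            rw [hm_add x z hx.1 hxz.le, inter_eq_self_of_subset_right hIocU, Real.volume_Ioc,
              ENNReal.toReal_ofReal (by linarith)]
          have hzIcc : z ∈ Icc 0 T := ⟨by linarith [hxIcc.1], le_trans hzt.le ht.2⟩
          have hslopeg : g z - g x ≤ C * (z - x) := by
            have := hg_lip x hxIcc z hzIcc
            rw [abs_of_pos (by linarith : (0:ℝ) < z - x)] at this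
            exact le_trans (le_abs_self _) this
          rw [slope_def_field, div_lt_iff₀ (by linarith : (0:ℝ) < z - x)]
          have h2' : 2 * C * (m z - m x) = 2 * C * (z - x) := by rw [hmz]
          have heq : fF z - fF x = (g z - g x) - 2 * C * (z - x) := by
            simp only [hfF_def]
            linarith [h2']
          nlinarith [mul_pos hr (by linarith : (0:ℝ) < z - x), hC0,
            mul_nonneg hC0 (by linarith : (0:ℝ) ≤ z - x)]
        · have hx0 : x ≠ 0 := by
            intro h
            exact hxU (hUsup (by rw [h]; exact Set.mem_insert _ _))
          have hxP : P x := by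
            by_contra hnot
            refine hxU (hUsup (Set.mem_insert_of_mem _ ⟨hnot, ?_, lt_of_lt_of_le hx.2 ht.2⟩))
            exact lt_of_le_of_ne (le_trans hs.1 hx.1) (Ne.symm hx0)
          obtain ⟨d₁, d₂, hd₁, hd₂, hA₁, hA₂⟩ := hxP
          have hwd : HasDerivAt w (d₁ - d₂) x := hd₁.sub hd₂
          have hgd : HasDerivAt g (⟪w x, d₁ - d₂⟫ + ⟪d₁ - d₂, w x⟫) x := by
            have h := hwd.inner ℝ hwd
            have heq : (fun τ => ⟪w τ, w τ⟫) = g := by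
              funext τ
              rw [hg_def, real_inner_self_eq_norm_sq]
            rwa [heq] at h
          have hG0 : ⟪w x, d₁ - d₂⟫ + ⟪d₁ - d₂, w x⟫ ≤ 0 := by
            have h : (0:ℝ) ≤ ⟪-d₁ - -d₂, u₁ x - u₂ x⟫ :=
              hmono (u₁ x, -d₁) hA₁ (u₂ x, -d₂) hA₂
            rw [show (-d₁) - (-d₂) = -(d₁ - d₂) from by abel, inner_neg_left] at h
            have h2 : ⟪d₁ - d₂, w x⟫ ≤ 0 := by
              simp only [hw_def]
              linarith
            have h3 : ⟪w x, d₁ - d₂⟫ ≤ 0 := by rw [real_inner_comm]; exact h2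
            linarith
          have htend := hasDerivAt_iff_tendsto_slope.mp hgd
          have hev : ∀ᶠ z in nhdsWithin x {x}ᶜ, slope g x z < r :=
            htend.eventually_lt_const (lt_of_le_of_lt hG0 hr)
          have hev' : ∀ᶠ z in nhdsWithin x (Ioi x), slope g x z < r :=
            hev.filter_mono (nhdsWithin_mono x (fun z hz => ne_of_gt hz))
          have hself : ∀ᶠ z in nhdsWithin x (Ioi x), z ∈ Ioi x := eventually_mem_nhdsWithin
          refine ((hev'.and hself).mono ?_).frequently
          rintro z ⟨hzr, hzx⟩
          rw [slope_def_field] at hzr ⊢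
          have hm0 : 0 ≤ m z - m x := by linarith [hm_mono (le_of_lt hzx)]
          have hle : fF z - fF x ≤ g z - g x := by
            simp only [hfF_def]
            nlinarith
          calc (fF z - fF x) / (z - x) ≤ (g z - g x) / (z - x) :=
                (div_le_div_iff_of_pos_right (sub_pos.2 hzx)).mpr hle
            _ < r := hzr
      have happ : fF t ≤ fF s := by
        have h := image_le_of_liminf_slope_right_le_deriv_boundary (f := fF)
          (B := fun _ => fF s) (B' := fun _ => 0) hf_cont (le_refl _) continuousOn_const
          (fun x _ => hasDerivWithinAt_const x _ _) bound
        exact h (right_mem_Icc.mpr hlt.le)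
      have hms : m s = 0 := by
        simp [hm_def, Ioc_self]
      have hmt : m t ≤ ε := by
        have h1 : volume (U ∩ Ioc s t) ≤ ENNReal.ofReal ε :=
          le_trans (measure_mono inter_subset_left) hUvol.le
        exact ENNReal.toReal_le_of_le_ofReal hε.le h1
      simp only [hfF_def, hms, mul_zero, sub_zero] at happ
      nlinarith [hm_mono (le_refl s)]
    by_contra hgt
    push_neg at hgt
    set D := g t - g s with hD_def
    have hD : 0 < D := by simp only [hD_def]; linarith
    have h2C1 : (0:ℝ) < 2 * C + 1 := by linarith
    set ε := D / (2 * (2 * C + 1)) with hε_def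
    have hεpos : 0 < ε := by positivity
    have h1 := hεbound ε hεpos
    have h2 : 2 * C * ε ≤ (2 * C + 1) * ε := by nlinarith
    have h3 : (2 * C + 1) * ε = D / 2 := by
      rw [hε_def]; field_simp
    simp only [hD_def] at h3
    linarith
  have h := Real.sqrt_le_sqrt key
  rwa [hg_def, Real.sqrt_sq (norm_nonneg _), Real.sqrt_sq (norm_nonneg _)] at h
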